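/- Let G be a finite group and H = {h_1, …, h_d} a minimal generating set of G with d ≥ 3. Let S = {e, h_1^{−1}h_2, h_2^{−1}h_3, …, h_{d−1}^{−1}h_d} ⊆ G. If g ∈ G satisfies g·S = S (where g·S = {g·s : s ∈ S}), then g = e. -/

import Mathlib

/-- Let `G` be a finite group and `h 1, …, h d` a minimal generating set of `G` (no
proper subset generates) with `d ≥ 3`. Let
`S = {1, (h 1)⁻¹ * h 2, (h 2)⁻¹ * h 3, …, (h (d-1))⁻¹ * h d}`. If `g • S = S`
(left translation), then `g = 1`. -/
theorem eq_one_of_smul_set_eq' (G : Type*) [Group G] [Fintype G]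
    (d : ℤ) (hd : 3 ≤ d) (h : ℤ → G)
    (hinj : Set.InjOn h (Set.Icc 1 d))
    (hgen : Subgroup.closure (h '' Set.Icc 1 d) = ⊤)
    (hmin : ∀ s : Set G, s ⊂ h '' Set.Icc 1 d → Subgroup.closure s ≠ ⊤)
    (g : G)
    (hS : (g * ·) '' (insert 1 ((fun i => (h i)⁻¹ * h (i + 1)) '' Set.Icc 1 (d - 1))) =
      insert 1 ((fun i => (h i)⁻¹ * h (i + 1)) '' Set.Icc 1 (d - 1))) :
    g = 1 := by
  by_contra hg
  set S : Set G := insert 1 ((fun i => (h i)⁻¹ * h (i + 1)) '' Set.Icc 1 (d - 1)) with hSdef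
  -- minimality contradiction machine
  have key : ∀ M : ℤ, 1 ≤ M → M ≤ d →
      h M ∈ Subgroup.closure ((h '' Set.Icc 1 d) \ {h M}) → False := by
    intro M hM1 hM2 hcl
    refine hmin ((h '' Set.Icc 1 d) \ {h M}) ⟨Set.diff_subset, fun hsub => ?_⟩ ?_
    · exact (hsub ⟨M, Set.mem_Icc.mpr ⟨hM1, hM2⟩, rfl⟩).2 rfl
    · rw [eq_top_iff, ← hgen, Subgroup.closure_le]
      rintro x ⟨a, ha, rfl⟩
      by_cases hx : h a = h M
      · rw [hx]; exact hcl
      · exact Subgroup.subset_closure ⟨⟨a, ha, rfl⟩, hx⟩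
  have hNmem : ∀ M : ℤ, 1 ≤ M → M ≤ d → ∀ a : ℤ, 1 ≤ a → a ≤ d → a ≠ M →
      h a ∈ Subgroup.closure ((h '' Set.Icc 1 d) \ {h M}) := by
    intro M hM1 hM2 a ha1 ha2 hne
    refine Subgroup.subset_closure ⟨⟨a, Set.mem_Icc.mpr ⟨ha1, ha2⟩, rfl⟩, fun hc => hne ?_⟩
    exact hinj (Set.mem_Icc.mpr ⟨ha1, ha2⟩) (Set.mem_Icc.mpr ⟨hM1, hM2⟩) hc
  -- relation s_i * s_k = 1 with i ≠ k is impossible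
  have lemA : ∀ i k : ℤ, i ∈ Set.Icc 1 (d-1) → k ∈ Set.Icc 1 (d-1) → i ≠ k →
      (h i)⁻¹ * h (i+1) * ((h k)⁻¹ * h (k+1)) = 1 → False := by
    intro i k hi hk hik eq
    obtain ⟨hi1, hi2⟩ := Set.mem_Icc.mp hi
    obtain ⟨hk1, hk2⟩ := Set.mem_Icc.mp hk
    rcases lt_or_gt_of_ne hik with hlt | hlt
    · refine key (k+1) (by omega) (by omega) ?_
      have e2 : (h k)⁻¹ * h (k+1) = ((h i)⁻¹ * h (i+1))⁻¹ := eq_inv_of_mul_eq_one_right eq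
      have hw : h k * ((h (i+1))⁻¹ * h i) = h (k+1) := by
        calc h k * ((h (i+1))⁻¹ * h i) = h k * ((h i)⁻¹ * h (i+1))⁻¹ := by group
          _ = h k * ((h k)⁻¹ * h (k+1)) := by rw [e2]
          _ = h (k+1) := by group
      have hmem : h k * ((h (i+1))⁻¹ * h i) ∈
          Subgroup.closure ((h '' Set.Icc 1 d) \ {h (k+1)}) :=
        mul_mem (hNmem (k+1) (by omega) (by omega) k (by omega) (by omega) (by omega))
          (mul_mem
            (inv_mem (hNmem (k+1) (by omega) (by omega) (i+1) (by omega) (by omega) (by omega)))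
            (hNmem (k+1) (by omega) (by omega) i (by omega) (by omega) (by omega)))
      rwa [hw] at hmem
    · refine key (i+1) (by omega) (by omega) ?_
      have e2 : (h i)⁻¹ * h (i+1) = ((h k)⁻¹ * h (k+1))⁻¹ := eq_inv_of_mul_eq_one_left eq
      have hw : h i * ((h (k+1))⁻¹ * h k) = h (i+1) := by
        calc h i * ((h (k+1))⁻¹ * h k) = h i * ((h k)⁻¹ * h (k+1))⁻¹ := by group
          _ = h i * ((h i)⁻¹ * h (i+1)) := by rw [e2]
          _ = h (i+1) := by group
      have hmem : h i * ((h (k+1))⁻¹ * h k) ∈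
          Subgroup.closure ((h '' Set.Icc 1 d) \ {h (i+1)}) :=
        mul_mem (hNmem (i+1) (by omega) (by omega) i (by omega) (by omega) (by omega))
          (mul_mem
            (inv_mem (hNmem (i+1) (by omega) (by omega) (k+1) (by omega) (by omega) (by omega)))
            (hNmem (i+1) (by omega) (by omega) k (by omega) (by omega) (by omega)))
      rwa [hw] at hmem
  -- relation s_i * s_k = s_m with i, k, m pairwise distinct is impossible
  have lemB : ∀ i k m : ℤ, i ∈ Set.Icc 1 (d-1) → k ∈ Set.Icc 1 (d-1) → m ∈ Set.Icc 1 (d-1) →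
      i ≠ k → i ≠ m → k ≠ m →
      (h i)⁻¹ * h (i+1) * ((h k)⁻¹ * h (k+1)) = (h m)⁻¹ * h (m+1) → False := by
    intro i k m hi hk hm hik him hkm eq
    obtain ⟨hi1, hi2⟩ := Set.mem_Icc.mp hi
    obtain ⟨hk1, hk2⟩ := Set.mem_Icc.mp hk
    obtain ⟨hm1, hm2⟩ := Set.mem_Icc.mp hm
    by_cases hc1 : k < i ∧ m < i
    · refine key (i+1) (by omega) (by omega) ?_
      have hw : h i * ((h m)⁻¹ * h (m+1)) * ((h (k+1))⁻¹ * h k) = h (i+1) := by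
        rw [← eq]; group
      have hmem : h i * ((h m)⁻¹ * h (m+1)) * ((h (k+1))⁻¹ * h k) ∈
          Subgroup.closure ((h '' Set.Icc 1 d) \ {h (i+1)}) :=
        mul_mem
          (mul_mem (hNmem (i+1) (by omega) (by omega) i (by omega) (by omega) (by omega))
            (mul_mem
              (inv_mem (hNmem (i+1) (by omega) (by omega) m (by omega) (by omega) (by omega)))
              (hNmem (i+1) (by omega) (by omega) (m+1) (by omega) (by omega) (by omega))))
          (mul_mem
            (inv_mem (hNmem (i+1) (by omega) (by omega) (k+1) (by omega) (by omega) (by omega)))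
            (hNmem (i+1) (by omega) (by omega) k (by omega) (by omega) (by omega)))
      rwa [hw] at hmem
    · by_cases hc2 : i < k ∧ m < k
      · refine key (k+1) (by omega) (by omega) ?_
        have hw : h k * ((h (i+1))⁻¹ * h i) * ((h m)⁻¹ * h (m+1)) = h (k+1) := by
          rw [← eq]; group
        have hmem : h k * ((h (i+1))⁻¹ * h i) * ((h m)⁻¹ * h (m+1)) ∈
            Subgroup.closure ((h '' Set.Icc 1 d) \ {h (k+1)}) :=
          mul_mem
            (mul_mem (hNmem (k+1) (by omega) (by omega) k (by omega) (by omega) (by omega))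
              (mul_mem
                (inv_mem (hNmem (k+1) (by omega) (by omega) (i+1) (by omega) (by omega) (by omega)))
                (hNmem (k+1) (by omega) (by omega) i (by omega) (by omega) (by omega))))
            (mul_mem
              (inv_mem (hNmem (k+1) (by omega) (by omega) m (by omega) (by omega) (by omega)))
              (hNmem (k+1) (by omega) (by omega) (m+1) (by omega) (by omega) (by omega)))
        rwa [hw] at hmem
      · refine key (m+1) (by omega) (by omega) ?_
        have hw : h m * ((h i)⁻¹ * h (i+1) * ((h k)⁻¹ * h (k+1))) = h (m+1) := by
          rw [eq]; group
        have hmem : h m * ((h i)⁻¹ * h (i+1) * ((h k)⁻¹ * h (k+1))) ∈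
            Subgroup.closure ((h '' Set.Icc 1 d) \ {h (m+1)}) :=
          mul_mem (hNmem (m+1) (by omega) (by omega) m (by omega) (by omega) (by omega))
            (mul_mem
              (mul_mem
                (inv_mem (hNmem (m+1) (by omega) (by omega) i (by omega) (by omega) (by omega)))
                (hNmem (m+1) (by omega) (by omega) (i+1) (by omega) (by omega) (by omega)))
              (mul_mem
                (inv_mem (hNmem (m+1) (by omega) (by omega) k (by omega) (by omega) (by omega)))
                (hNmem (m+1) (by omega) (by omega) (k+1) (by omega) (by omega) (by omega))))
        rwa [hw] at hmem
  -- basic facts about S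
  have hgS : ∀ x ∈ S, g * x ∈ S := by
    intro x hx
    rw [← hS]
    exact ⟨x, hx, rfl⟩
  have hmemS : ∀ x ∈ S, x = 1 ∨ ∃ i, i ∈ Set.Icc (1:ℤ) (d-1) ∧ (h i)⁻¹ * h (i+1) = x := by
    intro x hx
    rw [hSdef] at hx
    simpa [Set.mem_insert_iff, Set.mem_image] using hx
  have hgmem : g ∈ S := by
    have := hgS 1 (by rw [hSdef]; exact Set.mem_insert _ _)
    simpa using this
  have hginv : g⁻¹ ∈ S := by
    have h1 : (1 : G) ∈ (g * ·) '' S := by rw [hS, hSdef]; exact Set.mem_insert _ _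
    obtain ⟨x, hx, hx1⟩ := h1
    have hx2 : x = g⁻¹ := eq_inv_of_mul_eq_one_right hx1
    rwa [← hx2]
  rcases hmemS g hgmem with h1 | ⟨i, hi, hgi⟩
  · exact hg h1
  rcases hmemS g⁻¹ hginv with h1 | ⟨j, hj, hgj⟩
  · exact hg (by rwa [inv_eq_one] at h1)
  by_cases hij : i = j
  · -- the involution case: use a third element of S
    obtain ⟨hi1, hi2⟩ := Set.mem_Icc.mp hi
    obtain ⟨k, hk1, hk2, hki⟩ : ∃ k : ℤ, 1 ≤ k ∧ k ≤ d - 1 ∧ k ≠ i := by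
      by_cases h1 : i = 1
      · exact ⟨2, by omega, by omega, by omega⟩
      · exact ⟨1, by omega, by omega, by omega⟩
    have hkmem : k ∈ Set.Icc (1:ℤ) (d-1) := Set.mem_Icc.mpr ⟨hk1, hk2⟩
    have hsk : (h k)⁻¹ * h (k+1) ∈ S := by
      rw [hSdef]
      exact Set.mem_insert_iff.mpr (Or.inr ⟨k, hkmem, rfl⟩)
    rcases hmemS _ (hgS _ hsk) with h1 | ⟨m, hm, hgm⟩
    · refine lemA i k hi hkmem (by omega) ?_
      rw [hgi]
      exact h1
    · by_cases hmi : m = i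
      · rw [hmi, hgi] at hgm
        have hsk1 : (h k)⁻¹ * h (k+1) = 1 := left_eq_mul.mp hgm
        have hkk : h k = h (k+1) := inv_mul_eq_one.mp hsk1
        have := hinj (Set.mem_Icc.mpr ⟨by omega, by omega⟩)
          (Set.mem_Icc.mpr ⟨by omega, by omega⟩) hkk
        omega
      · by_cases hmk : m = k
        · rw [hmk] at hgm
          exact hg (right_eq_mul.mp hgm)
        · refine lemB i k m hi hkmem hm (by omega) (fun hc => hmi hc.symm)
            (fun hc => hmk hc.symm) ?_
          rw [hgi]
          exact hgm.symm
  · refine lemA i j hi hj hij ?_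
    rw [hgi, hgj]
    group
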